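/- Let L > 0, 𝒟 > 0, and σ ∈ C²(ℝ) with σ′(s) ≤ 0 for all s ≥ 0. Suppose h ∈ C⁴([0,L]) and Γ ∈ C²([0,L]) satisfy h(x) > 0 and Γ(x) > 0 for all x ∈ [0,L], the steady equations ((h³/3)h‴ + (h²/2)σ′(Γ)Γ′)′ = 0 and ((h²/2)Γh‴ + hΓσ′(Γ)Γ′)′ = 𝒟Γ″ on [0,L], and the boundary conditions h′(0) = h′(L) = h‴(0) = h‴(L) = Γ′(0) = Γ′(L) = 0. Then h and Γ are constant functions on [0,L]. (Every positive equilibrium of the thin film system with insoluble surfactant is flat.) -/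

import Mathlib

open Set

private lemma const_on_aux (L : ℝ) (hL : 0 < L) (f : ℝ → ℝ) (hf : Differentiable ℝ f)
    (h0 : ∀ x ∈ Icc 0 L, deriv f x = 0) : ∀ x ∈ Icc 0 L, f x = f 0 := by
  apply constant_of_derivWithin_zero hf.differentiableOn
  intro x hx
  rw [(hf x).derivWithin ((uniqueDiffOn_Icc hL) x (Ico_subset_Icc_self hx))]
  exact h0 x (Ico_subset_Icc_self hx)

theorem stmt_11 (L D : ℝ) (hL : 0 < L) (hD : 0 < D)
    (σ : ℝ → ℝ) (hσ : ContDiff ℝ 2 σ) (hσ' : ∀ s : ℝ, 0 ≤ s → deriv σ s ≤ 0)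
    (h Γ : ℝ → ℝ) (hh : ContDiff ℝ 4 h) (hΓ : ContDiff ℝ 2 Γ)
    (hpos : ∀ x ∈ Icc 0 L, 0 < h x ∧ 0 < Γ x)
    (heq1 : ∀ x ∈ Icc 0 L,
      deriv (fun y => (h y) ^ 3 / 3 * iteratedDeriv 3 h y
        + (h y) ^ 2 / 2 * deriv σ (Γ y) * deriv Γ y) x = 0)
    (heq2 : ∀ x ∈ Icc 0 L,
      deriv (fun y => (h y) ^ 2 / 2 * Γ y * iteratedDeriv 3 h y
        + h y * Γ y * deriv σ (Γ y) * deriv Γ y) x = D * iteratedDeriv 2 Γ x)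
    (hbc1 : deriv h 0 = 0) (hbc2 : deriv h L = 0)
    (hbc3 : iteratedDeriv 3 h 0 = 0) (hbc4 : iteratedDeriv 3 h L = 0)
    (hbc5 : deriv Γ 0 = 0) (hbc6 : deriv Γ L = 0) :
    ∀ x ∈ Icc 0 L, ∀ y ∈ Icc 0 L, h x = h y ∧ Γ x = Γ y := by
  -- Basic regularity
  have hh1 : ContDiff ℝ 1 h := hh.of_le (by norm_num)
  have hΓ1 : ContDiff ℝ 1 Γ := hΓ.of_le (by norm_num)
  have hΓ' : ContDiff ℝ 1 (deriv Γ) :=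
    ((contDiff_succ_iff_deriv (n := 1)).mp (by exact_mod_cast hΓ)).2.2
  have hσ'c : ContDiff ℝ 1 (deriv σ) :=
    ((contDiff_succ_iff_deriv (n := 1)).mp (by exact_mod_cast hσ)).2.2
  have hσΓ : ContDiff ℝ 1 (fun y => deriv σ (Γ y)) := hσ'c.comp hΓ1
  have hh3' : ContDiff ℝ 3 (deriv h) := ((contDiff_succ_iff_deriv (n := 3)).mp (by exact_mod_cast hh)).2.2
  have hh2'' : ContDiff ℝ 2 (deriv (deriv h)) := ((contDiff_succ_iff_deriv (n := 2)).mp (by exact_mod_cast hh3')).2.2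
  have hh1''' : ContDiff ℝ 1 (deriv (deriv (deriv h))) := ((contDiff_succ_iff_deriv (n := 1)).mp (by exact_mod_cast hh2'')).2.2
  have hid3 : iteratedDeriv 3 h = deriv (deriv (deriv h)) := by
    simp [iteratedDeriv_succ, iteratedDeriv_zero]
  have hid2h : iteratedDeriv 2 h = deriv (deriv h) := by
    simp [iteratedDeriv_succ, iteratedDeriv_zero]
  have hid2Γ : iteratedDeriv 2 Γ = deriv (deriv Γ) := by
    simp [iteratedDeriv_succ, iteratedDeriv_zero]
  have hh3c : ContDiff ℝ 1 (iteratedDeriv 3 h) := by rw [hid3]; exact hh1'''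
  -- F1 constant, equals 0
  set F1 : ℝ → ℝ := fun y => (h y) ^ 3 / 3 * iteratedDeriv 3 h y
      + (h y) ^ 2 / 2 * deriv σ (Γ y) * deriv Γ y with hF1
  have hF1c : ContDiff ℝ 1 F1 := by
    apply ContDiff.add
    · exact ((hh1.pow 3).div_const 3).mul hh3c
    · exact (((hh1.pow 2).div_const 2).mul hσΓ).mul hΓ'
  have hF1diff : Differentiable ℝ F1 := hF1c.differentiable one_ne_zero
  have hF10 : F1 0 = 0 := by simp [hF1, hbc3, hbc5]
  have hF1eq : ∀ x ∈ Icc 0 L, F1 x = 0 := by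
    intro x hx
    rw [const_on_aux L hL F1 hF1diff heq1 x hx, hF10]
  -- F2 = G - D * Γ'
  set G : ℝ → ℝ := fun y => (h y) ^ 2 / 2 * Γ y * iteratedDeriv 3 h y
      + h y * Γ y * deriv σ (Γ y) * deriv Γ y with hG
  have hGc : ContDiff ℝ 1 G := by
    apply ContDiff.add
    · exact (((hh1.pow 2).div_const 2).mul hΓ1).mul hh3c
    · exact ((hh1.mul hΓ1).mul hσΓ).mul hΓ'
  set F2 : ℝ → ℝ := fun y => G y - D * deriv Γ y with hF2
  have hF2c : ContDiff ℝ 1 F2 := hGc.sub (contDiff_const.mul hΓ')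
  have hF2diff : Differentiable ℝ F2 := hF2c.differentiable one_ne_zero
  have hF2deriv : ∀ x ∈ Icc 0 L, deriv F2 x = 0 := by
    intro x hx
    have := heq2 x hx
    rw [hF2]
    rw [deriv_fun_sub (hGc.differentiable one_ne_zero x) (((contDiff_const.mul hΓ').differentiable one_ne_zero) x)]
    rw [deriv_const_mul D ((hΓ'.differentiable one_ne_zero) x)]
    rw [this, hid2Γ]
    ring
  have hF20 : F2 0 = 0 := by simp [hF2, hG, hbc3, hbc5]
  have hF2eq : ∀ x ∈ Icc 0 L, F2 x = 0 := by
    intro x hx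
    rw [const_on_aux L hL F2 hF2diff hF2deriv x hx, hF20]
  -- deriv Γ = 0 on Icc
  have hΓ'0 : ∀ x ∈ Icc 0 L, deriv Γ x = 0 := by
    intro x hx
    obtain ⟨ha, hg⟩ := hpos x hx
    have e1 := hF1eq x hx
    have e2 := hF2eq x hx
    set a := h x; set g := Γ x; set s := deriv σ (Γ x); set p := deriv Γ x
    set t := iteratedDeriv 3 h x
    have hs : s ≤ 0 := hσ' g hg.le
    simp only [hF1, hF2, hG] at e1 e2
    have key : (2 * a * D - a ^ 2 * g * s / 2) * p = 0 := by nlinarith [e1, e2]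
    have hfac : 0 < 2 * a * D - a ^ 2 * g * s / 2 := by
      have h1 : 0 < 2 * a * D := by positivity
      have h2 : a ^ 2 * g * s ≤ 0 :=
        mul_nonpos_of_nonneg_of_nonpos (by positivity) hs
      linarith
    rcases mul_eq_zero.mp key with h' | h'
    · exact absurd h' hfac.ne'
    · exact h'
  -- h''' = 0 on Icc
  have hhhh0 : ∀ x ∈ Icc 0 L, iteratedDeriv 3 h x = 0 := by
    intro x hx
    have e1 := hF1eq x hx
    have := hΓ'0 x hx
    simp only [hF1, this, mul_zero, add_zero] at e1
    obtain ⟨ha, _⟩ := hpos x hx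
    have : (h x) ^ 3 / 3 ≠ 0 := by positivity
    rcases mul_eq_zero.mp e1 with h' | h'
    · exact absurd h' this
    · exact h'
  -- Γ constant
  have hΓconst : ∀ x ∈ Icc 0 L, Γ x = Γ 0 :=
    const_on_aux L hL Γ (hΓ1.differentiable one_ne_zero) hΓ'0
  -- h'' constant on Icc
  set c := iteratedDeriv 2 h 0 with hc
  have hh2const : ∀ x ∈ Icc 0 L, iteratedDeriv 2 h x = c := by
    intro x hx
    refine const_on_aux L hL (iteratedDeriv 2 h) ?_ ?_ x hx
    · rw [hid2h]; exact hh2''.differentiable (by norm_num)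
    · intro y hy
      have : deriv (iteratedDeriv 2 h) y = iteratedDeriv 3 h y := by
        rw [hid2h, hid3]
      rw [this]; exact hhhh0 y hy
  -- v = deriv h - c * x  has zero derivative
  have hcL : c * L = 0 ∧ ∀ x ∈ Icc 0 L, deriv h x = c * x := by
    set v : ℝ → ℝ := fun y => deriv h y - c * y with hv
    have hdh : Differentiable ℝ (deriv h) := hh3'.differentiable (by norm_num)
    have hcy : Differentiable ℝ (fun y : ℝ => c * y) := by fun_prop
    have hvdiff : Differentiable ℝ v := hdh.sub hcy
    have hvd : ∀ x ∈ Icc 0 L, deriv v x = 0 := by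
      intro x hx
      rw [hv, deriv_fun_sub (hdh x) (hcy x)]
      have : deriv (fun y : ℝ => c * y) x = c := by
        simpa using ((hasDerivAt_id x).const_mul c).deriv
      rw [this]
      have h2 : deriv (deriv h) x = iteratedDeriv 2 h x := by rw [hid2h]
      rw [h2, hh2const x hx, sub_self]
    have hvconst := const_on_aux L hL v hvdiff hvd
    have hv0 : v 0 = 0 := by simp [hv, hbc1]
    have hveq : ∀ x ∈ Icc 0 L, deriv h x = c * x := by
      intro x hx
      have := hvconst x hx
      rw [hv0] at this
      simp only [hv] at this
      linarith
    constructor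
    · have := hveq L ⟨le_of_lt hL, le_refl L⟩
      rw [hbc2] at this; linarith
    · exact hveq
  have hc0 : c = 0 := by
    rcases mul_eq_zero.mp hcL.1 with h' | h'
    · exact h'
    · exact absurd h' hL.ne'
  have hh'0 : ∀ x ∈ Icc 0 L, deriv h x = 0 := by
    intro x hx
    rw [hcL.2 x hx, hc0, zero_mul]
  have hhconst : ∀ x ∈ Icc 0 L, h x = h 0 :=
    const_on_aux L hL h (hh1.differentiable one_ne_zero) hh'0
  intro x hx y hy
  exact ⟨by rw [hhconst x hx, hhconst y hy], by rw [hΓconst x hx, hΓconst y hy]⟩
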